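/- For all s_1, s_2 > 0, the span program P_OR(s_1,s_2) computes the two-bit OR function OR_2, and its witness sizes with costs (√s_1, √s_2) are: wsize_{(√s_1,√s_2)}(P_OR(s_1,s_2), x) = √(s_1+s_2) for x ∈ {(0,0), (1,0), (0,1)}, and wsize_{(√s_1,√s_2)}(P_OR(s_1,s_2), (1,1)) = √(s_1+s_2)/2. -/

import Mathlib

noncomputable section

/-- A span program on input bits indexed by `ι`, with a finite-dimensional complex inner
product space `V`, a target vector, free input vectors indexed by `Ifree`, and input
vectors indexed by `Iin j b` (available when the `j`-th input bit equals `b`). -/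
structure SpanProgram (ι : Type) where
  V : Type
  [nacg : NormedAddCommGroup V]
  [ips : InnerProductSpace ℂ V]
  [fd : FiniteDimensional ℂ V]
  Ifree : Type
  [freeFin : Fintype Ifree]
  [freeDec : DecidableEq Ifree]
  Iin : ι → Bool → Type
  [inFin : ∀ j b, Fintype (Iin j b)]
  [inDec : ∀ j b, DecidableEq (Iin j b)]
  target : V
  vfree : Ifree → V
  vin : ∀ j b, Iin j b → V

attribute [instance] SpanProgram.nacg SpanProgram.ips SpanProgram.fd
attribute [instance] SpanProgram.freeFin SpanProgram.freeDec
attribute [instance] SpanProgram.inFin SpanProgram.inDec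

namespace SpanProgram

variable {ι : Type} [Fintype ι] [DecidableEq ι]

/-- The index set `I = I_free ∪ ⋃_{j,b} I_{j,b}` of all input vectors. -/
abbrev Idx (P : SpanProgram ι) : Type := P.Ifree ⊕ Σ j : ι, Σ b : Bool, P.Iin j b

/-- All input vectors, as a single family over `Idx`. -/
def vec (P : SpanProgram ι) : P.Idx → P.V :=
  Sum.elim P.vfree (fun p => P.vin p.1 p.2.1 p.2.2)

/-- `P` evaluates to true on `x` iff the target lies in the span of the available
input vectors (the free ones together with those indexed by `I_{j, x_j}`). -/
def spanned (P : SpanProgram ι) (x : ι → Bool) : Prop :=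
  P.target ∈ Submodule.span ℂ
    (Set.range P.vfree ∪ ⋃ j : ι, Set.range (P.vin j (x j)))

/-- The boolean function computed by `P`. -/
def fP (P : SpanProgram ι) (x : ι → Bool) : Bool :=
  letI := Classical.propDecidable (P.spanned x)
  decide (P.spanned x)

/-- `w : ℂ^I` is a witness for `f_P(x) = 1`: it is supported on available input vectors,
and the input vectors weighted by `w` sum to the target. -/
def IsWitness1 (P : SpanProgram ι) (x : ι → Bool) (w : P.Idx → ℂ) : Prop :=
  (∀ (j : ι) (b : Bool) (i : P.Iin j b), b ≠ x j → w (.inr ⟨j, b, i⟩) = 0) ∧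
  ∑ i : P.Idx, w i • P.vec i = P.target

/-- `w' ∈ V` is a witness for `f_P(x) = 0`: it has unit inner product with the target and
is orthogonal to all available input vectors. -/
def IsWitness0 (P : SpanProgram ι) (x : ι → Bool) (w' : P.V) : Prop :=
  (inner ℂ P.target w' : ℂ) = 1 ∧
  (∀ i : P.Ifree, (inner ℂ (P.vfree i) w' : ℂ) = 0) ∧
  (∀ (j : ι) (i : P.Iin j (x j)), (inner ℂ (P.vin j (x j) i) w' : ℂ) = 0)

/-- `‖S|w⟩‖²`, the size of a `1`-witness `w` with costs `s`. -/
def wval1 (P : SpanProgram ι) (s : ι → ℝ) (w : P.Idx → ℂ) : ℝ :=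
  ∑ j : ι, ∑ b : Bool, ∑ i : P.Iin j b, s j * ‖w (.inr ⟨j, b, i⟩)‖ ^ 2

/-- `1 + ‖S^f|w⟩‖²`, the full size of a `1`-witness `w` with costs `s`. -/
def wval1f (P : SpanProgram ι) (s : ι → ℝ) (w : P.Idx → ℂ) : ℝ :=
  1 + (∑ i : P.Ifree, ‖w (.inl i)‖ ^ 2) + P.wval1 s w

/-- `‖S A†|w'⟩‖²`, the size of a `0`-witness `w'` with costs `s`. -/
def wval0 (P : SpanProgram ι) (s : ι → ℝ) (w' : P.V) : ℝ :=
  ∑ j : ι, ∑ b : Bool, ∑ i : P.Iin j b, s j * ‖(inner ℂ (P.vin j b i) w' : ℂ)‖ ^ 2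

/-- `‖|w'⟩‖² + ‖S A†|w'⟩‖²`, the full size of a `0`-witness `w'` with costs `s`. -/
def wval0f (P : SpanProgram ι) (s : ι → ℝ) (w' : P.V) : ℝ :=
  ‖w'‖ ^ 2 + P.wval0 s w'

/-- The witness size of `P` on input `x` with costs `s`. -/
def wsizex (P : SpanProgram ι) (s : ι → ℝ) (x : ι → Bool) : ℝ :=
  if P.fP x then sInf { r | ∃ w, P.IsWitness1 x w ∧ r = P.wval1 s w }
  else sInf { r | ∃ w', P.IsWitness0 x w' ∧ r = P.wval0 s w' }

/-- The witness size of `P` with costs `s`. -/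
def wsize (P : SpanProgram ι) (s : ι → ℝ) : ℝ := ⨆ x : ι → Bool, P.wsizex s x

/-- The full witness size of `P` on input `x` with costs `s`. -/
def wsizefx (P : SpanProgram ι) (s : ι → ℝ) (x : ι → Bool) : ℝ :=
  if P.fP x then sInf { r | ∃ w, P.IsWitness1 x w ∧ r = P.wval1f s w }
  else sInf { r | ∃ w', P.IsWitness0 x w' ∧ r = P.wval0f s w' }

/-- The full witness size of `P` with costs `s`. -/
def wsizef (P : SpanProgram ι) (s : ι → ℝ) : ℝ := ⨆ x : ι → Bool, P.wsizefx s x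

end SpanProgram

end

instance (b : Bool) : Fintype (cond b Unit Empty) :=
  match b with
  | true => inferInstanceAs (Fintype Unit)
  | false => inferInstanceAs (Fintype Empty)

instance (b : Bool) : DecidableEq (cond b Unit Empty) :=
  match b with
  | true => inferInstanceAs (DecidableEq Unit)
  | false => inferInstanceAs (DecidableEq Empty)

/-- The span program `P_OR(s₁,s₂)` computing two-bit OR: the space is `ℂ`, the target is
`1`, and the input vectors are `(s₁/s_p)^{1/4} ∈ I_{1,1}` and `(s₂/s_p)^{1/4} ∈ I_{2,1}`
with `s_p = s₁ + s₂` and `I_free = I_{1,0} = I_{2,0} = ∅`. -/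
noncomputable def POR (s1 s2 : ℝ) : SpanProgram (Fin 2) where
  V := ℂ
  Ifree := Empty
  Iin := fun _ b => cond b Unit Empty
  target := 1
  vfree := Empty.elim
  vin := fun j b => match b with
    | true => fun _ => (↑(((if j = 0 then s1 else s2) / (s1 + s2)) ^ ((1 : ℝ)/4)) : ℂ)
    | false => fun i => i.elim


lemma sum_Iin_true {M : Type*} [AddCommMonoid M] (s1 s2 : ℝ) (j : Fin 2)
    (f : (POR s1 s2).Iin j true → M) : ∑ i, f i = f () := by
  letI : Unique ((POR s1 s2).Iin j true) := inferInstanceAs (Unique Unit)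
  exact Fintype.sum_unique f

lemma sum_Iin_false {M : Type*} [AddCommMonoid M] (s1 s2 : ℝ) (j : Fin 2)
    (f : (POR s1 s2).Iin j false → M) : ∑ i, f i = 0 := by
  letI : IsEmpty ((POR s1 s2).Iin j false) := inferInstanceAs (IsEmpty Empty)
  exact Fintype.sum_empty f

lemma sum_Ifree {M : Type*} [AddCommMonoid M] (s1 s2 : ℝ)
    (f : (POR s1 s2).Ifree → M) : ∑ i, f i = 0 := by
  letI : IsEmpty ((POR s1 s2).Ifree) := inferInstanceAs (IsEmpty Empty)
  exact Fintype.sum_empty f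

lemma sum_idx {M : Type*} [AddCommMonoid M] (s1 s2 : ℝ) (f : (POR s1 s2).Idx → M) :
    ∑ i : (POR s1 s2).Idx, f i = f (.inr ⟨0, true, ()⟩) + f (.inr ⟨1, true, ()⟩) := by
  simp [Fintype.sum_sum_type, ← Finset.univ_sigma_univ, Finset.sum_sigma,
    Fin.sum_univ_two, Fintype.sum_bool, sum_Iin_true, sum_Iin_false, sum_Ifree]

/-- first input vector, as a real number -/
noncomputable def aR1 (s1 s2 : ℝ) : ℝ := (s1/(s1+s2)) ^ ((1:ℝ)/4)
noncomputable def aR2 (s1 s2 : ℝ) : ℝ := (s2/(s1+s2)) ^ ((1:ℝ)/4)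

lemma POR_vin0 (s1 s2 : ℝ) (i : (POR s1 s2).Iin 0 true) :
    (POR s1 s2).vin 0 true i = (aR1 s1 s2 : ℂ) := by
  simp [POR, aR1]

lemma POR_vin1 (s1 s2 : ℝ) (i : (POR s1 s2).Iin 1 true) :
    (POR s1 s2).vin 1 true i = (aR2 s1 s2 : ℂ) := by
  simp [POR, aR2]

lemma POR_vec0 (s1 s2 : ℝ) : (POR s1 s2).vec (.inr ⟨0, true, ()⟩) = (aR1 s1 s2 : ℂ) :=
  POR_vin0 s1 s2 ()

lemma POR_vec1 (s1 s2 : ℝ) : (POR s1 s2).vec (.inr ⟨1, true, ()⟩) = (aR2 s1 s2 : ℂ) :=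
  POR_vin1 s1 s2 ()

lemma aR1_pos (s1 s2 : ℝ) (h1 : 0 < s1) (h2 : 0 < s2) : 0 < aR1 s1 s2 :=
  Real.rpow_pos_of_pos (div_pos h1 (add_pos h1 h2)) _

lemma aR2_pos (s1 s2 : ℝ) (h1 : 0 < s1) (h2 : 0 < s2) : 0 < aR2 s1 s2 :=
  Real.rpow_pos_of_pos (div_pos h2 (add_pos h1 h2)) _

lemma aR1_sq (s1 s2 : ℝ) (h1 : 0 < s1) (h2 : 0 < s2) :
    (aR1 s1 s2) ^ 2 = Real.sqrt s1 / Real.sqrt (s1 + s2) := by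
  have hd : (0:ℝ) ≤ s1/(s1+s2) := (div_pos h1 (add_pos h1 h2)).le
  rw [aR1, ← Real.rpow_natCast ((s1/(s1+s2)) ^ ((1:ℝ)/4)) 2, ← Real.rpow_mul hd]
  norm_num
  rw [← Real.sqrt_eq_rpow, Real.sqrt_div h1.le]

lemma aR2_sq (s1 s2 : ℝ) (h1 : 0 < s1) (h2 : 0 < s2) :
    (aR2 s1 s2) ^ 2 = Real.sqrt s2 / Real.sqrt (s1 + s2) := by
  have hd : (0:ℝ) ≤ s2/(s1+s2) := (div_pos h2 (add_pos h1 h2)).le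
  rw [aR2, ← Real.rpow_natCast ((s2/(s1+s2)) ^ ((1:ℝ)/4)) 2, ← Real.rpow_mul hd]
  norm_num
  rw [← Real.sqrt_eq_rpow, Real.sqrt_div h2.le]

lemma POR_fP (s1 s2 : ℝ) (h1 : 0 < s1) (h2 : 0 < s2) (x : Fin 2 → Bool) :
    (POR s1 s2).fP x = (x 0 || x 1) := by
  have hspan : (POR s1 s2).spanned x ↔ (x 0 || x 1) = true := by
    constructor
    · intro hs
      by_contra hor
      simp only [Bool.or_eq_true, not_or] at hor
      obtain ⟨hx0, hx1⟩ := hor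
      rw [Bool.not_eq_true] at hx0 hx1
      rw [SpanProgram.spanned] at hs
      have hempty : (Set.range (POR s1 s2).vfree ∪
          ⋃ j : Fin 2, Set.range ((POR s1 s2).vin j (x j))) = ∅ := by
        apply Set.eq_empty_iff_forall_notMem.2
        rintro v (⟨i, -⟩ | hv)
        · exact Empty.elim i
        · simp only [Set.mem_iUnion, Set.mem_range] at hv
          obtain ⟨j, i, -⟩ := hv
          have hx : x j = false := by fin_cases j <;> assumption
          rw [hx] at i
          exact Empty.elim i
      rw [hempty, Submodule.span_empty] at hs
      simp only [Submodule.mem_bot] at hs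
      exact one_ne_zero (show (1:ℂ) = 0 from hs)
    · intro hor
      rw [Bool.or_eq_true] at hor
      rw [SpanProgram.spanned]
      show ((1:ℂ) : (POR s1 s2).V) ∈ _
      rcases hor with hx | hx
      · have hmem : (((aR1 s1 s2 : ℂ)) : (POR s1 s2).V) ∈ (Set.range (POR s1 s2).vfree ∪
            ⋃ j : Fin 2, Set.range ((POR s1 s2).vin j (x j))) := by
          refine Set.mem_union_right _ (Set.mem_iUnion.2 ⟨0, ?_⟩)
          rw [hx]
          exact ⟨(), POR_vin0 s1 s2 ()⟩
        have hne : ((aR1 s1 s2 : ℂ)) ≠ 0 := by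
          exact_mod_cast (aR1_pos s1 s2 h1 h2).ne'
        have := Submodule.smul_mem _ ((aR1 s1 s2 : ℂ))⁻¹ (Submodule.subset_span hmem)
        rwa [show ((aR1 s1 s2 : ℂ))⁻¹ • (((aR1 s1 s2 : ℂ)) : (POR s1 s2).V)
          = ((1:ℂ) : (POR s1 s2).V) from by
            show ((aR1 s1 s2 : ℂ))⁻¹ * ((aR1 s1 s2 : ℂ)) = (1:ℂ)
            exact inv_mul_cancel₀ hne] at this
      · have hmem : (((aR2 s1 s2 : ℂ)) : (POR s1 s2).V) ∈ (Set.range (POR s1 s2).vfree ∪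
            ⋃ j : Fin 2, Set.range ((POR s1 s2).vin j (x j))) := by
          refine Set.mem_union_right _ (Set.mem_iUnion.2 ⟨1, ?_⟩)
          rw [hx]
          exact ⟨(), POR_vin1 s1 s2 ()⟩
        have hne : ((aR2 s1 s2 : ℂ)) ≠ 0 := by
          exact_mod_cast (aR2_pos s1 s2 h1 h2).ne'
        have := Submodule.smul_mem _ ((aR2 s1 s2 : ℂ))⁻¹ (Submodule.subset_span hmem)
        rwa [show ((aR2 s1 s2 : ℂ))⁻¹ • (((aR2 s1 s2 : ℂ)) : (POR s1 s2).V)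
          = ((1:ℂ) : (POR s1 s2).V) from by
            show ((aR2 s1 s2 : ℂ))⁻¹ * ((aR2 s1 s2 : ℂ)) = (1:ℂ)
            exact inv_mul_cancel₀ hne] at this
  rw [SpanProgram.fP]
  rcases hb : (x 0 || x 1) with _ | _
  · simp only [decide_eq_false_iff_not]
    intro h; exact absurd (hspan.1 h) (by rw [hb]; simp)
  · simp only [decide_eq_true_eq]
    exact hspan.2 hb

lemma inner_C (z w : ℂ) : (inner ℂ z w : ℂ) = starRingEnd ℂ z * w := RCLike.inner_apply' z w

lemma wval1_POR (s1 s2 : ℝ) (w : (POR s1 s2).Idx → ℂ) :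
    (POR s1 s2).wval1 ![Real.sqrt s1, Real.sqrt s2] w
      = Real.sqrt s1 * ‖w (.inr ⟨0, true, ()⟩)‖ ^ 2
        + Real.sqrt s2 * ‖w (.inr ⟨1, true, ()⟩)‖ ^ 2 := by
  rw [SpanProgram.wval1, Fin.sum_univ_two, Fintype.sum_bool, Fintype.sum_bool,
    sum_Iin_true, sum_Iin_true, sum_Iin_false, sum_Iin_false]
  simp

lemma wval0_POR (s1 s2 : ℝ) (h1 : 0 < s1) (h2 : 0 < s2) (w' : ℂ) :
    (POR s1 s2).wval0 ![Real.sqrt s1, Real.sqrt s2] w'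
      = Real.sqrt (s1 + s2) * ‖w'‖ ^ 2 := by
  have hq : 0 < Real.sqrt (s1 + s2) := Real.sqrt_pos.2 (add_pos h1 h2)
  unfold SpanProgram.wval0
  rw [Fin.sum_univ_two, Fintype.sum_bool, Fintype.sum_bool,
    sum_Iin_true, sum_Iin_true, sum_Iin_false, sum_Iin_false]
  erw [POR_vin0, POR_vin1, inner_C, inner_C]
  simp only [Complex.conj_ofReal, norm_mul, Complex.norm_real, Real.norm_eq_abs,
    abs_of_pos (aR1_pos s1 s2 h1 h2), abs_of_pos (aR2_pos s1 s2 h1 h2)]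
  simp only [Matrix.cons_val_zero, Matrix.cons_val_one, Matrix.head_cons, add_zero]
  rw [mul_pow, mul_pow, aR1_sq s1 s2 h1 h2, aR2_sq s1 s2 h1 h2]
  have e1 : Real.sqrt s1 * Real.sqrt s1 = s1 := Real.mul_self_sqrt h1.le
  have e2 : Real.sqrt s2 * Real.sqrt s2 = s2 := Real.mul_self_sqrt h2.le
  have e3 : Real.sqrt (s1+s2) * Real.sqrt (s1+s2) = s1 + s2 :=
    Real.mul_self_sqrt (add_pos h1 h2).le
  field_simp
  nlinarith [e1, e2, e3, sq_nonneg (‖w'‖)]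

def wOR (s1 s2 : ℝ) (c1 c2 : ℂ) : (POR s1 s2).Idx → ℂ := fun i =>
  match i with
  | .inl _ => 0
  | .inr ⟨j, b, _⟩ => if b = true then (if j = 0 then c1 else c2) else 0

lemma wOR_e0 (s1 s2 : ℝ) (c1 c2 : ℂ) : wOR s1 s2 c1 c2 (.inr ⟨0, true, ()⟩) = c1 := by
  simp [wOR]

lemma wOR_e1 (s1 s2 : ℝ) (c1 c2 : ℂ) : wOR s1 s2 c1 c2 (.inr ⟨1, true, ()⟩) = c2 := by
  simp [wOR]

lemma wOR_false (s1 s2 : ℝ) (c1 c2 : ℂ) (j : Fin 2) (i : (POR s1 s2).Iin j false) :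
    wOR s1 s2 c1 c2 (.inr ⟨j, false, i⟩) = 0 := by
  simp [wOR]

lemma wOR_true (s1 s2 : ℝ) (c1 c2 : ℂ) (j : Fin 2) (i : (POR s1 s2).Iin j true) :
    wOR s1 s2 c1 c2 (.inr ⟨j, true, i⟩) = if j = 0 then c1 else c2 := by
  simp [wOR]

lemma POR_target (s1 s2 : ℝ) : (POR s1 s2).target = (1 : ℂ) := rfl

set_option maxHeartbeats 1000000 in
/-- `P_OR(s₁,s₂)` computes `OR₂` and its witness sizes with costs
`(√s₁, √s₂)` are `√(s₁+s₂)` on inputs `00, 10, 01` and `√(s₁+s₂)/2` on input `11`. -/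
theorem POR_witness_sizes (s1 s2 : ℝ) (h1 : 0 < s1) (h2 : 0 < s2) :
    (∀ x, (POR s1 s2).fP x = (x 0 || x 1)) ∧
    (POR s1 s2).wsizex ![Real.sqrt s1, Real.sqrt s2] ![false, false]
      = Real.sqrt (s1 + s2) ∧
    (POR s1 s2).wsizex ![Real.sqrt s1, Real.sqrt s2] ![true, false]
      = Real.sqrt (s1 + s2) ∧
    (POR s1 s2).wsizex ![Real.sqrt s1, Real.sqrt s2] ![false, true]
      = Real.sqrt (s1 + s2) ∧
    (POR s1 s2).wsizex ![Real.sqrt s1, Real.sqrt s2] ![true, true]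
      = Real.sqrt (s1 + s2) / 2 := by
  refine ⟨POR_fP s1 s2 h1 h2, ?_, ?_, ?_, ?_⟩
  · rw [SpanProgram.wsizex, POR_fP s1 s2 h1 h2]
    simp only [Matrix.cons_val_zero, Matrix.cons_val_one, Matrix.head_cons,
      Bool.or_false, Bool.false_or, if_false, Bool.false_eq_true]
    have hset : {r | ∃ w', (POR s1 s2).IsWitness0 ![false, false] w' ∧
        r = (POR s1 s2).wval0 ![Real.sqrt s1, Real.sqrt s2] w'}
        = {Real.sqrt (s1 + s2)} := by
      ext r
      simp only [Set.mem_setOf_eq, Set.mem_singleton_iff]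
      constructor
      · rintro ⟨w', ⟨ht, -, -⟩, rfl⟩
        have hw' : w' = (show (POR s1 s2).V from (1:ℂ)) := by
          rw [POR_target] at ht
          have ht' := (inner_C 1 w').symm.trans ht
          rw [map_one] at ht'
          exact (one_mul (M := ℂ) w').symm.trans ht'
        rw [hw', wval0_POR s1 s2 h1 h2]
        simp
      · rintro rfl
        refine ⟨show (POR s1 s2).V from (1:ℂ), ⟨?_, fun i => Empty.elim i, fun j i => ?_⟩, ?_⟩
        · rw [POR_target]
          change (inner ℂ (1:ℂ) (1:ℂ) : ℂ) = 1
          rw [inner_C, map_one, one_mul]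
        · have hx : (![false, false] j) = false := by fin_cases j <;> rfl
          rw [hx] at i
          exact Empty.elim i
        · rw [wval0_POR s1 s2 h1 h2]
          simp
    rw [hset, csInf_singleton]

  · have hq : 0 < Real.sqrt (s1 + s2) := Real.sqrt_pos.2 (add_pos h1 h2)
    have hs1 : 0 < Real.sqrt s1 := Real.sqrt_pos.2 h1
    have ha1 := aR1_pos s1 s2 h1 h2
    have hsq1 := aR1_sq s1 s2 h1 h2
    rw [SpanProgram.wsizex, POR_fP s1 s2 h1 h2]
    simp only [Matrix.cons_val_zero, Matrix.cons_val_one, Matrix.head_cons,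
      Bool.true_or, if_true]
    have hset : {r | ∃ w, (POR s1 s2).IsWitness1 ![true, false] w ∧
        r = (POR s1 s2).wval1 ![Real.sqrt s1, Real.sqrt s2] w}
        = {Real.sqrt (s1 + s2)} := by
      ext r
      simp only [Set.mem_setOf_eq, Set.mem_singleton_iff]
      constructor
      · rintro ⟨w, ⟨hsupp, hsum⟩, rfl⟩
        have hw2 : w (.inr ⟨1, true, ()⟩) = 0 := by
          apply hsupp 1 true ()
          simp
        rw [sum_idx, POR_vec0, POR_vec1, POR_target, hw2] at hsum
        change w (.inr ⟨0, true, ()⟩) * ((aR1 s1 s2 : ℝ) : ℂ) + (0:ℂ) * ((aR2 s1 s2 : ℝ) : ℂ)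
          = (1:ℂ) at hsum
        rw [zero_mul, add_zero] at hsum
        have hn : ‖w (.inr ⟨0, true, ()⟩) * ((aR1 s1 s2 : ℝ) : ℂ)‖ = ‖(1:ℂ)‖ :=
          congrArg norm hsum
        rw [norm_mul, Complex.norm_real, Real.norm_eq_abs, abs_of_pos ha1,
          norm_one] at hn
        rw [wval1_POR, hw2]
        simp only [norm_zero, ne_eq, zero_pow, mul_zero, add_zero, OfNat.ofNat_ne_zero,
          not_false_eq_true]
        have hA2 : ‖w (.inr ⟨0, true, ()⟩)‖ ^ 2 * (Real.sqrt s1 / Real.sqrt (s1+s2)) = 1 := by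
          rw [← hsq1]; nlinarith [hn]
        field_simp at hA2
        linarith [hA2]
      · rintro rfl
        refine ⟨wOR s1 s2 (((aR1 s1 s2)⁻¹ : ℝ) : ℂ) 0, ⟨?_, ?_⟩, ?_⟩
        · intro j b i hb
          cases b
          · exact wOR_false s1 s2 _ _ j i
          · rw [wOR_true]
            fin_cases j
            · exact absurd rfl hb
            · simp
        · rw [sum_idx, POR_vec0, POR_vec1, POR_target, wOR_e0, wOR_e1]
          change (((aR1 s1 s2)⁻¹ : ℝ) : ℂ) * ((aR1 s1 s2 : ℝ) : ℂ) + (0:ℂ) * ((aR2 s1 s2 : ℝ) : ℂ)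
            = (1:ℂ)
          rw [zero_mul, add_zero, ← Complex.ofReal_mul,
            inv_mul_cancel₀ ha1.ne', Complex.ofReal_one]
        · rw [wval1_POR, wOR_e0, wOR_e1]
          simp only [norm_zero, ne_eq, zero_pow, mul_zero, add_zero, OfNat.ofNat_ne_zero,
            not_false_eq_true, Complex.norm_real, Real.norm_eq_abs]
          rw [abs_of_pos (inv_pos.2 ha1), inv_pow]
          rw [hsq1]
          field_simp
    rw [hset, csInf_singleton]

  · have hq : 0 < Real.sqrt (s1 + s2) := Real.sqrt_pos.2 (add_pos h1 h2)
    have hs2 : 0 < Real.sqrt s2 := Real.sqrt_pos.2 h2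
    have ha2 := aR2_pos s1 s2 h1 h2
    have hsq2 := aR2_sq s1 s2 h1 h2
    rw [SpanProgram.wsizex, POR_fP s1 s2 h1 h2]
    simp only [Matrix.cons_val_zero, Matrix.cons_val_one, Matrix.head_cons,
      Bool.or_true, if_true]
    have hset : {r | ∃ w, (POR s1 s2).IsWitness1 ![false, true] w ∧
        r = (POR s1 s2).wval1 ![Real.sqrt s1, Real.sqrt s2] w}
        = {Real.sqrt (s1 + s2)} := by
      ext r
      simp only [Set.mem_setOf_eq, Set.mem_singleton_iff]
      constructor
      · rintro ⟨w, ⟨hsupp, hsum⟩, rfl⟩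
        have hw1 : w (.inr ⟨0, true, ()⟩) = 0 := by
          apply hsupp 0 true ()
          simp
        rw [sum_idx, POR_vec0, POR_vec1, POR_target, hw1] at hsum
        change (0:ℂ) * ((aR1 s1 s2 : ℝ) : ℂ) + w (.inr ⟨1, true, ()⟩) * ((aR2 s1 s2 : ℝ) : ℂ)
          = (1:ℂ) at hsum
        rw [zero_mul, zero_add] at hsum
        have hn : ‖w (.inr ⟨1, true, ()⟩) * ((aR2 s1 s2 : ℝ) : ℂ)‖ = ‖(1:ℂ)‖ :=
          congrArg norm hsum
        rw [norm_mul, Complex.norm_real, Real.norm_eq_abs, abs_of_pos ha2,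
          norm_one] at hn
        rw [wval1_POR, hw1]
        simp only [norm_zero, ne_eq, zero_pow, mul_zero, zero_add, OfNat.ofNat_ne_zero,
          not_false_eq_true]
        have hA2 : ‖w (.inr ⟨1, true, ()⟩)‖ ^ 2 * (Real.sqrt s2 / Real.sqrt (s1+s2)) = 1 := by
          rw [← hsq2]; nlinarith [hn]
        field_simp at hA2
        linarith [hA2]
      · rintro rfl
        refine ⟨wOR s1 s2 0 (((aR2 s1 s2)⁻¹ : ℝ) : ℂ), ⟨?_, ?_⟩, ?_⟩
        · intro j b i hb
          cases b
          · exact wOR_false s1 s2 _ _ j i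
          · rw [wOR_true]
            fin_cases j
            · simp
            · exact absurd rfl hb
        · rw [sum_idx, POR_vec0, POR_vec1, POR_target, wOR_e0, wOR_e1]
          change (0:ℂ) * ((aR1 s1 s2 : ℝ) : ℂ) + (((aR2 s1 s2)⁻¹ : ℝ) : ℂ) * ((aR2 s1 s2 : ℝ) : ℂ)
            = (1:ℂ)
          rw [zero_mul, zero_add, ← Complex.ofReal_mul,
            inv_mul_cancel₀ ha2.ne', Complex.ofReal_one]
        · rw [wval1_POR, wOR_e0, wOR_e1]
          simp only [norm_zero, ne_eq, zero_pow, mul_zero, zero_add, OfNat.ofNat_ne_zero,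
            not_false_eq_true, Complex.norm_real, Real.norm_eq_abs]
          rw [abs_of_pos (inv_pos.2 ha2), inv_pow]
          rw [hsq2]
          field_simp
    rw [hset, csInf_singleton]

  · have hq : 0 < Real.sqrt (s1 + s2) := Real.sqrt_pos.2 (add_pos h1 h2)
    have hs1 : 0 < Real.sqrt s1 := Real.sqrt_pos.2 h1
    have hs2 : 0 < Real.sqrt s2 := Real.sqrt_pos.2 h2
    have ha1 := aR1_pos s1 s2 h1 h2
    have ha2 := aR2_pos s1 s2 h1 h2
    have hsq1 := aR1_sq s1 s2 h1 h2
    have hsq2 := aR2_sq s1 s2 h1 h2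
    rw [SpanProgram.wsizex, POR_fP s1 s2 h1 h2]
    simp only [Matrix.cons_val_zero, Matrix.cons_val_one, Matrix.head_cons,
      Bool.or_true, if_true]
    set q := Real.sqrt (s1 + s2) with hqdef
    -- the optimal witness
    set c1R : ℝ := q / 2 * aR1 s1 s2 / Real.sqrt s1 with hc1
    set c2R : ℝ := q / 2 * aR2 s1 s2 / Real.sqrt s2 with hc2
    have hc1pos : 0 < c1R := by positivity
    have hc2pos : 0 < c2R := by positivity
    have v1 : c1R * aR1 s1 s2 = 1 / 2 := by
      have : c1R * aR1 s1 s2 = q / 2 * (aR1 s1 s2 ^ 2) / Real.sqrt s1 := by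
        rw [hc1]; ring
      rw [this, hsq1]
      field_simp
    have v2 : c2R * aR2 s1 s2 = 1 / 2 := by
      have : c2R * aR2 s1 s2 = q / 2 * (aR2 s1 s2 ^ 2) / Real.sqrt s2 := by
        rw [hc2]; ring
      rw [this, hsq2]
      field_simp
    have val1 : Real.sqrt s1 * c1R ^ 2 = q / 4 := by
      have e : Real.sqrt s1 * c1R ^ 2 = (c1R * aR1 s1 s2) * (q / 2) := by
        rw [hc1]
        field_simp
      rw [e, v1]
      ring
    have val2 : Real.sqrt s2 * c2R ^ 2 = q / 4 := by
      have e : Real.sqrt s2 * c2R ^ 2 = (c2R * aR2 s1 s2) * (q / 2) := by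
        rw [hc2]
        field_simp
      rw [e, v2]
      ring
    have hmem : ∃ w, (POR s1 s2).IsWitness1 ![true, true] w ∧
        q / 2 = (POR s1 s2).wval1 ![Real.sqrt s1, Real.sqrt s2] w := by
      refine ⟨wOR s1 s2 ((c1R : ℝ) : ℂ) ((c2R : ℝ) : ℂ), ⟨?_, ?_⟩, ?_⟩
      · intro j b i hb
        cases b
        · exact wOR_false s1 s2 _ _ j i
        · exfalso
          apply hb
          fin_cases j <;> rfl
      · rw [sum_idx, POR_vec0, POR_vec1, POR_target, wOR_e0, wOR_e1]
        change ((c1R : ℝ) : ℂ) * ((aR1 s1 s2 : ℝ) : ℂ) + ((c2R : ℝ) : ℂ) * ((aR2 s1 s2 : ℝ) : ℂ)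
          = (1:ℂ)
        rw [← Complex.ofReal_mul, ← Complex.ofReal_mul, ← Complex.ofReal_add]
        rw [v1, v2]
        norm_num
      · rw [wval1_POR, wOR_e0, wOR_e1]
        simp only [Complex.norm_real, Real.norm_eq_abs, abs_of_pos hc1pos,
          abs_of_pos hc2pos]
        rw [val1, val2]
        ring
    have hlb : ∀ r ∈ {r | ∃ w, (POR s1 s2).IsWitness1 ![true, true] w ∧
        r = (POR s1 s2).wval1 ![Real.sqrt s1, Real.sqrt s2] w}, q / 2 ≤ r := by
      rintro r ⟨w, ⟨-, hsum⟩, rfl⟩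
      rw [sum_idx, POR_vec0, POR_vec1, POR_target] at hsum
      change w (.inr ⟨0, true, ()⟩) * ((aR1 s1 s2 : ℝ) : ℂ)
        + w (.inr ⟨1, true, ()⟩) * ((aR2 s1 s2 : ℝ) : ℂ) = (1:ℂ) at hsum
      set A := ‖w (.inr ⟨0, true, ()⟩)‖ with hA
      set B := ‖w (.inr ⟨1, true, ()⟩)‖ with hB
      have hAnn : 0 ≤ A := norm_nonneg _
      have hBnn : 0 ≤ B := norm_nonneg _
      have hge : 1 ≤ A * aR1 s1 s2 + B * aR2 s1 s2 := by
        have hno : ‖w (.inr ⟨0, true, ()⟩) * ((aR1 s1 s2 : ℝ) : ℂ)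
            + w (.inr ⟨1, true, ()⟩) * ((aR2 s1 s2 : ℝ) : ℂ)‖ = ‖(1:ℂ)‖ :=
          congrArg norm hsum
        rw [norm_one] at hno
        calc (1:ℝ) = ‖w (.inr ⟨0, true, ()⟩) * ((aR1 s1 s2 : ℝ) : ℂ)
              + w (.inr ⟨1, true, ()⟩) * ((aR2 s1 s2 : ℝ) : ℂ)‖ := hno.symm
          _ ≤ ‖w (.inr ⟨0, true, ()⟩) * ((aR1 s1 s2 : ℝ) : ℂ)‖
              + ‖w (.inr ⟨1, true, ()⟩) * ((aR2 s1 s2 : ℝ) : ℂ)‖ := norm_add_le _ _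
          _ = A * aR1 s1 s2 + B * aR2 s1 s2 := by
              rw [norm_mul, norm_mul, Complex.norm_real, Complex.norm_real,
                Real.norm_eq_abs, Real.norm_eq_abs, abs_of_pos ha1, abs_of_pos ha2]
      have huv : 1 / 2 ≤ (A * aR1 s1 s2) ^ 2 + (B * aR2 s1 s2) ^ 2 := by
        nlinarith [sq_nonneg (A * aR1 s1 s2 - B * aR2 s1 s2),
          sq_nonneg (A * aR1 s1 s2 + B * aR2 s1 s2 - 1), hge]
      have expand : Real.sqrt s1 * A ^ 2 + Real.sqrt s2 * B ^ 2
          = q * ((A * aR1 s1 s2) ^ 2 + (B * aR2 s1 s2) ^ 2) := by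
        rw [mul_pow, mul_pow, hsq1, hsq2]
        field_simp
      rw [wval1_POR, ← hA, ← hB, expand]
      nlinarith [huv, hq]
    exact le_antisymm (csInf_le ⟨q/2, hlb⟩ hmem) (le_csInf ⟨q/2, hmem⟩ hlb)
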